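/- Let k = 2r be even, m = 2n + k, and for each vertex S of SG_{n,k} (a stable n-subset of ℤ_m) associate to S, assuming 0 ∈ S, the weakly increasing system a_1 ≤ … ≤ a_k in (0, 2π] defined by {a_s : 1 ≤ s ≤ k} = {2πr/m : 0 < r ≤ m, r−1 ∉ S, r−2 ∉ S} (with multiplicity). Then [0, 2π) is the disjoint union of the intervals [2πr/m, 2π(r+2)/m) for r ∈ S and the intervals [a_s − 2π/m, a_s) for 1 ≤ s ≤ k. -/

import Mathlib

open scoped Classical

/-- Let `k = 2r`, `m = 2n+k`, and `S` a stable `n`-subset of `ℤ_m` with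
`0 ∈ S`.  With `T = {x : 0 < x ≤ m, x−1 ∉ S, x−2 ∉ S (mod m)}`, the interval
`[0, 2π)` is the disjoint union of the intervals `[2πj/m, 2π(j+2)/m)` for `j ∈ S`
and the intervals `[2πx/m − 2π/m, 2πx/m)` for `x ∈ T`. -/
theorem stmt18 (n k r m : ℕ) (hk : k = 2 * r) (hm : m = 2 * n + k) (hn : 1 ≤ n)
    (S : Finset ℕ) (hSsub : S ⊆ Finset.range m) (hS0 : 0 ∈ S)
    (hScard : S.card = n) (hstable : ∀ i ∈ S, (i + 1) % m ∉ S) :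
    let T : Finset ℕ := (Finset.Icc 1 m).filter fun x =>
      (x - 1) % m ∉ S ∧ (x + m - 2) % m ∉ S
    let I : ℕ → Set ℝ := fun j =>
      Set.Ico (2 * Real.pi * j / m) (2 * Real.pi * (j + 2) / m)
    let J : ℕ → Set ℝ := fun x =>
      Set.Ico (2 * Real.pi * x / m - 2 * Real.pi / m) (2 * Real.pi * x / m)
    (Set.Ico (0 : ℝ) (2 * Real.pi) = (⋃ j ∈ S, I j) ∪ (⋃ x ∈ T, J x)) ∧
      (∀ j ∈ S, ∀ j' ∈ S, j ≠ j' → Disjoint (I j) (I j')) ∧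
      (∀ x ∈ T, ∀ x' ∈ T, x ≠ x' → Disjoint (J x) (J x')) ∧
      (∀ j ∈ S, ∀ x ∈ T, Disjoint (I j) (J x)) := by
  intro T I J
  have hπ : (0:ℝ) < Real.pi := Real.pi_pos
  have hm2 : 2 ≤ m := by omega
  have hmR : (0:ℝ) < m := by exact_mod_cast (by omega : 0 < m)
  have hlt : ∀ j ∈ S, j < m := fun j hj => Finset.mem_range.mp (hSsub hj)
  have hm1 : m - 1 ∉ S := by
    intro h
    have h2 := hstable _ h
    rw [show m - 1 + 1 = m by omega, Nat.mod_self] at h2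
    exact h2 hS0
  have hle : ∀ j ∈ S, j + 2 ≤ m := by
    intro j hj
    have h1 := hlt j hj
    have h2 : j ≠ m - 1 := fun e => hm1 (e ▸ hj)
    omega
  have hsucc : ∀ j ∈ S, j + 1 ∉ S := by
    intro j hj h
    have h1 := hstable j hj
    rw [Nat.mod_eq_of_lt (by have := hle j hj; omega)] at h1
    exact h1 h
  have monoR : ∀ a b : ℝ, a ≤ b → 2 * Real.pi * a / (m:ℝ) ≤ 2 * Real.pi * b / m := by
    intro a b hab
    gcongr
  have disj : ∀ a b c d : ℝ, b ≤ c → Disjoint (Set.Ico a b) (Set.Ico c d) := by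
    intro a b c d h
    rw [Set.disjoint_left]
    rintro x ⟨_, hb⟩ ⟨hc, _⟩
    linarith
  have Tfacts : ∀ x ∈ T, 1 ≤ x ∧ x ≤ m ∧ (x - 1) ∉ S ∧ ∀ j ∈ S, x ≠ j + 2 := by
    intro x hx
    simp only [T, Finset.mem_filter, Finset.mem_Icc] at hx
    obtain ⟨⟨h1, h2⟩, h3, h4⟩ := hx
    refine ⟨h1, h2, ?_, ?_⟩
    · rwa [Nat.mod_eq_of_lt (by omega)] at h3
    · intro j hj he
      subst he
      apply h4
      rw [show j + 2 + m - 2 = j + m by omega, Nat.add_mod_right,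
        Nat.mod_eq_of_lt (hlt j hj)]
      exact hj
  refine ⟨?_, ?_, ?_, ?_⟩
  · -- union
    ext t
    simp only [Set.mem_union, Set.mem_iUnion, Set.mem_Ico, exists_prop, I, J]
    constructor
    · rintro ⟨ht0, ht2⟩
      set u : ℝ := t * m / (2 * Real.pi) with hu
      have hu0 : 0 ≤ u := by positivity
      have hum : u < m := by
        rw [hu, div_lt_iff₀ (by positivity)]
        nlinarith
      set c : ℕ := ⌊u⌋₊ with hc
      have hcm : c < m := by
        have := (Nat.floor_lt hu0).mpr hum
        exact_mod_cast this
      have hcl : 2 * Real.pi * c / m ≤ t := by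
        rw [div_le_iff₀ hmR]
        have h1 : (c:ℝ) ≤ u := Nat.floor_le hu0
        rw [hu, le_div_iff₀ (by positivity)] at h1
        nlinarith
      have hcu : t < 2 * Real.pi * (c + 1) / m := by
        rw [lt_div_iff₀ hmR]
        have h1 : u < c + 1 := Nat.lt_floor_add_one u
        rw [hu, div_lt_iff₀ (by positivity)] at h1
        nlinarith
      by_cases hcS : c ∈ S
      · left
        refine ⟨c, hcS, hcl, ?_⟩
        have h2 : 2 * Real.pi * ((c:ℝ) + 1) / m ≤ 2 * Real.pi * ((c:ℝ) + 2) / m :=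
          monoR _ _ (by linarith)
        linarith
      · by_cases hprev : 1 ≤ c ∧ c - 1 ∈ S
        · left
          refine ⟨c - 1, hprev.2, ?_, ?_⟩
          · have h2 : 2 * Real.pi * ((c-1:ℕ):ℝ) / m ≤ 2 * Real.pi * (c:ℝ) / m :=
              monoR _ _ (by exact_mod_cast Nat.sub_le c 1)
            linarith
          · have e : ((c - 1 : ℕ):ℝ) + 2 = (c:ℝ) + 1 := by
              rw [Nat.cast_sub hprev.1]; ring
            rw [e]
            exact hcu
        · right
          refine ⟨c + 1, ?_, ?_, ?_⟩
          · simp only [T, Finset.mem_filter, Finset.mem_Icc]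
            refine ⟨⟨by omega, by omega⟩, ?_, ?_⟩
            · rw [show c + 1 - 1 = c from rfl, Nat.mod_eq_of_lt hcm]
              exact hcS
            · rcases Nat.eq_zero_or_pos c with h0 | h1
              · rw [h0, show 0 + 1 + m - 2 = m - 1 by omega,
                  Nat.mod_eq_of_lt (by omega)]
                exact hm1
              · rw [show c + 1 + m - 2 = (c - 1) + m by omega, Nat.add_mod_right,
                  Nat.mod_eq_of_lt (by omega)]
                exact fun h => hprev ⟨h1, h⟩
          · have e : 2 * Real.pi * ((c + 1 : ℕ):ℝ) / m - 2 * Real.pi / m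
                = 2 * Real.pi * (c:ℝ) / m := by
              push_cast
              field_simp
              ring
            rw [e]
            exact hcl
          · push_cast
            exact hcu
    · rintro (⟨j, hj, h1, h2⟩ | ⟨x, hx, h1, h2⟩)
      · have hp : (0:ℝ) ≤ 2 * Real.pi * (j:ℝ) / m := by positivity
        have hjm : ((j:ℝ) + 2) ≤ m := by exact_mod_cast hle j hj
        have h3 : 2 * Real.pi * ((j:ℝ) + 2) / m ≤ 2 * Real.pi := by
          rw [div_le_iff₀ hmR]
          nlinarith
        constructor <;> linarith
      · obtain ⟨hx1, hxm, -, -⟩ := Tfacts x hx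
        have hx1R : (1:ℝ) ≤ (x:ℝ) := by exact_mod_cast hx1
        have hxmR : ((x:ℝ)) ≤ m := by exact_mod_cast hxm
        have h3 : 2 * Real.pi * (1:ℝ) / m ≤ 2 * Real.pi * (x:ℝ) / m := monoR _ _ hx1R
        have h4 : 2 * Real.pi * (1:ℝ) / m = 2 * Real.pi / m := by ring
        have h5 : 2 * Real.pi * (x:ℝ) / m ≤ 2 * Real.pi := by
          rw [div_le_iff₀ hmR]
          nlinarith
        have h6 : (0:ℝ) ≤ 2 * Real.pi / m := by positivity
        constructor <;> linarith
  · -- I-I disjoint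
    intro j hj j' hj' hne
    have key : ∀ a b : ℕ, a ∈ S → b ∈ S → a < b → Disjoint (I a) (I b) := by
      intro a b ha hb hab
      have hne1 : b ≠ a + 1 := fun e => hsucc a ha (e ▸ hb)
      have h2 : a + 2 ≤ b := by omega
      exact disj _ _ _ _ (monoR _ _ (by exact_mod_cast h2))
    rcases lt_or_gt_of_ne hne with h | h
    · exact key _ _ hj hj' h
    · exact (key _ _ hj' hj h).symm
  · -- J-J disjoint
    intro x hx x' hx' hne
    have key : ∀ a b : ℕ, a ∈ T → b ∈ T → a < b → Disjoint (J a) (J b) := by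
      intro a b ha hb hab
      obtain ⟨ha1, -, -, -⟩ := Tfacts a ha
      have h2 : (a:ℝ) ≤ (b:ℝ) - 1 := by
        have : a + 1 ≤ b := hab
        have : ((a:ℝ)) + 1 ≤ b := by exact_mod_cast this
        linarith
      refine disj _ _ _ _ ?_
      have h3 : 2 * Real.pi * (a:ℝ) / m ≤ 2 * Real.pi * ((b:ℝ) - 1) / m := monoR _ _ h2
      have h4 : 2 * Real.pi * ((b:ℝ) - 1) / m = 2 * Real.pi * (b:ℝ) / m - 2 * Real.pi / m := by
        field_simp
      linarith
    rcases lt_or_gt_of_ne hne with h | h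
    · exact key _ _ hx hx' h
    · exact (key _ _ hx' hx h).symm
  · -- I-J disjoint
    intro j hj x hx
    obtain ⟨hx1, hxm, hxS, hxj⟩ := Tfacts x hx
    have hy1 : x - 1 ≠ j := fun e => hxS (e ▸ hj)
    have hy2 : x ≠ j + 2 := hxj j hj
    rcases Nat.lt_or_ge (x - 1) j with h | h
    · -- x ≤ j : J right endpoint ≤ I left endpoint
      have h2 : (x:ℝ) ≤ (j:ℝ) := by exact_mod_cast (by omega : x ≤ j)
      exact (disj _ _ _ _ (monoR _ _ h2)).symm
    · have h2 : j + 2 ≤ x - 1 := by omega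
      have h3 : ((j:ℝ) + 2) ≤ (x:ℝ) - 1 := by
        have : ((j:ℝ)) + 2 + 1 ≤ (x:ℝ) := by exact_mod_cast (by omega : j + 2 + 1 ≤ x)
        linarith
      refine disj _ _ _ _ ?_
      have h4 : 2 * Real.pi * ((j:ℝ) + 2) / m ≤ 2 * Real.pi * ((x:ℝ) - 1) / m := monoR _ _ h3
      have h5 : 2 * Real.pi * ((x:ℝ) - 1) / m = 2 * Real.pi * (x:ℝ) / m - 2 * Real.pi / m := by
        field_simp
      linarith
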